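/- Let A be a crossed product G-graded algebra over 𝒞 with structure map ζ: 𝒞 → C_A(B), B = A_1, and U a B-module. Then P = A ⊗_B U is a G-graded bimodule over 𝒞 in the sense that for all g ∈ G, p_g ∈ P_g = A_g ⊗_B U, and c ∈ 𝒞: p_g · ζ'(c) = ζ({}^g c) · p_g, where ζ' = θ ∘ ζ: 𝒞 → End_A(P)^op with θ(c)(a ⊗ u) = ac ⊗ u. -/

import Mathlib

open DirectSum

lemma coe_sum_fintype {ι M S : Type*} [Fintype ι] [DecidableEq ι] [AddCommMonoid M]
    [SetLike S M] [AddSubmonoidClass S M] (A : ι → S) (x : ⨁ i, A i) :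
    DirectSum.coeAddMonoidHom A x = ∑ i, (x i : M) := by
  conv_lhs => rw [← DirectSum.sum_univ_of x]
  rw [map_sum]
  simp [DirectSum.coeAddMonoidHom_of]

lemma aux_inv_mem {G A : Type*} [Group G] [Finite G] [DecidableEq G] [Ring A]
    (𝒜 : G → AddSubgroup A) (honeA : (1:A) ∈ 𝒜 1)
    (hmulA : ∀ {g h : G} {a b : A}, a ∈ 𝒜 g → b ∈ 𝒜 h → a * b ∈ 𝒜 (g*h))
    (hA : DirectSum.IsInternal 𝒜) (g : G) (v : Aˣ) (hv : (v:A) ∈ 𝒜 g) :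
    ((v⁻¹ : Aˣ) : A) ∈ 𝒜 g⁻¹ := by
  cases nonempty_fintype G
  obtain ⟨F, hF⟩ := hA.surjective ((v⁻¹ : Aˣ) : A)
  set F' : ⨁ h, 𝒜 h := DFinsupp.equivFunOnFintype.symm
    (fun h => (⟨(v:A) * (F (g⁻¹*h) : A), by
      have := hmulA hv (F (g⁻¹*h)).2
      simpa [mul_inv_cancel_left] using this⟩ : 𝒜 h)) with hF'
  have hF'app : ∀ h, ((F' h : A)) = (v:A) * (F (g⁻¹*h) : A) := by
    intro h; rw [hF']; rfl
  have hcoe : DirectSum.coeAddMonoidHom 𝒜 F' = 1 := by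
    rw [coe_sum_fintype]
    have : ∑ h, ((F' h : A)) = (v:A) * ∑ h, (F (g⁻¹*h) : A) := by
      rw [Finset.mul_sum]; exact Finset.sum_congr rfl fun h _ => hF'app h
    rw [this]
    have : ∑ h : G, (F (g⁻¹*h) : A) = ∑ k : G, (F k : A) :=
      Fintype.sum_equiv (Equiv.mulLeft g⁻¹) _ _ (fun h => rfl)
    rw [this, ← coe_sum_fintype, hF, Units.mul_inv]
  have hone : DirectSum.coeAddMonoidHom 𝒜
      (DirectSum.of (fun i => 𝒜 i) 1 ⟨1, honeA⟩) = 1 :=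
    DirectSum.coeAddMonoidHom_of 𝒜 1 ⟨1, honeA⟩
  have heq : F' = DirectSum.of (fun i => 𝒜 i) 1 ⟨1, honeA⟩ :=
    hA.injective (hcoe.trans hone.symm)
  have hzero : ∀ k : G, k ≠ g⁻¹ → (F k : A) = 0 := by
    intro k hk
    have h1 : (g * k) ≠ 1 := fun h =>
      hk (by rw [← inv_mul_cancel_left g k, h, mul_one])
    have : F' (g*k) = 0 := by
      rw [heq, DirectSum.of_eq_of_ne _ _ _ h1]
    have h2 : (v:A) * (F (g⁻¹*(g*k)) : A) = 0 := by
      rw [← hF'app, this]; rfl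
    rw [inv_mul_cancel_left] at h2
    exact (Units.mul_right_eq_zero v).mp h2
  have : ((v⁻¹ : Aˣ) : A) = (F g⁻¹ : A) := by
    rw [← hF, coe_sum_fintype]
    rw [Finset.sum_eq_single g⁻¹ (fun k _ hk => hzero k hk) (by simp)]
  rw [this]; exact (F g⁻¹).2


/-- Let `𝒞` be a `G`-graded `G`-acted algebra, `A` a crossed
product `G`-graded algebra over `𝒞` with structure map `ζ : 𝒞 → C_A(B)`,
`B = A_1`, `U` a `B`-module, and `P = A ⊗_B U` (equivalently, a `G`-graded
`A`-module with `P_1 = U`, `A` being strongly graded).  Let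
`ζ' = θ ∘ ζ : 𝒞 → End_A(P)^op`, where `θ(a)(x ⊗ u) = xa ⊗ u`; thus `ζ'(c)` is the
`A`-linear endomorphism `f` of `P` with `f(u) = ζ(c) • u` for `u ∈ P_1`.  Then `P`
is a `G`-graded bimodule over `𝒞`: for all `g ∈ G`, `p ∈ P_g` and `c ∈ 𝒞`,
`p · ζ'(c) = ζ(ᵍc) · p`. -/
theorem stmt16 {G C A P : Type*} [Group G] [Finite G] [DecidableEq G]
    [Ring C] [Ring A] [AddCommGroup P] [Module A P]
    (ℭ : G → AddSubgroup C) (𝒜 : G → AddSubgroup A)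
    (honeA : (1 : A) ∈ 𝒜 1)
    (hmulA : ∀ {g h : G} {a b : A}, a ∈ 𝒜 g → b ∈ 𝒜 h → a * b ∈ 𝒜 (g * h))
    (hA : DirectSum.IsInternal 𝒜)
    -- `A` is a crossed product
    (u : G → Aˣ) (hu : ∀ g : G, (u g : A) ∈ 𝒜 g)
    -- `𝒞` is a `G`-graded `G`-acted algebra
    (σ : G → C → C)
    (hℭ : DirectSum.IsInternal ℭ)
    (hσ : ∀ {g h : G} {c : C}, c ∈ ℭ h → σ g c ∈ ℭ (g * h * g⁻¹))
    -- the structure map `ζ : 𝒞 → C_A(B)`, graded and `G`-equivariant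
    (ζ : C →+* A)
    (hζC : ∀ c : C, ζ c ∈ Set.centralizer ((𝒜 1 : AddSubgroup A) : Set A))
    (hζgr : ∀ {h : G} {c : C}, c ∈ ℭ h → ζ c ∈ 𝒜 h)
    (hζσ : ∀ (g : G) (c : C), ζ (σ g c) = (u g : A) * ζ c * ((u g)⁻¹ : Aˣ))
    -- `P` is a `G`-graded `A`-module
    (𝔓 : G → AddSubgroup P)
    (hP : DirectSum.IsInternal 𝔓)
    (hPs : ∀ {g x : G} {a : A} {p : P}, a ∈ 𝒜 g → p ∈ 𝔓 x → a • p ∈ 𝔓 (g * x))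
    -- `f = ζ'(c) = θ(ζ(c))`
    (c : C) (f : P →ₗ[A] P)
    (hf : ∀ v ∈ 𝔓 (1 : G), f v = ζ c • v) :
    ∀ g : G, ∀ p ∈ 𝔓 g, f p = ζ (σ g c) • p := by
  intro g p hp
  have hinv : (((u g)⁻¹ : Aˣ) : A) ∈ 𝒜 g⁻¹ :=
    aux_inv_mem 𝒜 honeA hmulA hA g (u g) (hu g)
  set q : P := (((u g)⁻¹ : Aˣ) : A) • p with hq
  have hq1 : q ∈ 𝔓 1 := by
    have := hPs hinv hp
    rwa [inv_mul_cancel g] at this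
  have hpq : p = (u g : A) • q := by
    rw [hq, smul_smul, Units.mul_inv, one_smul]
  calc f p = (u g : A) • f q := by rw [hpq, map_smul]
    _ = (u g : A) • (ζ c • q) := by rw [hf q hq1]
    _ = ((u g : A) * ζ c * (((u g)⁻¹ : Aˣ) : A)) • p := by
        rw [hq, smul_smul, smul_smul, mul_assoc]
    _ = ζ (σ g c) • p := by rw [hζσ]
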